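/- (Ditor) For every positive integer n, every n-ladder has breadth at most n. -/

import Mathlib

/-- `P` is an `n`-ladder: a nonempty lower finite lattice in which every element
has at most `n` lower covers. -/
def IsNLadder (P : Type*) [Lattice P] (n : ℕ) : Prop :=
  Nonempty P ∧ (∀ x : P, (Set.Iic x).Finite) ∧ ∀ x : P, {y : P | y ⋖ x}.ncard ≤ n

/-- `P` has breadth at most `n`: every nonempty finite subset `X` of `P` has a
subset `Y` with at most `n` elements and the same supremum. -/
def HasBreadthAtMost (P : Type*) [SemilatticeSup P] (n : ℕ) : Prop :=
  ∀ (X : Finset P) (hX : X.Nonempty),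
    ∃ (Y : Finset P) (hY : Y.Nonempty), Y ⊆ X ∧ Y.card ≤ n ∧ X.sup' hX id = Y.sup' hY id

private lemma exists_le_covby {P : Type*} [Lattice P]
    (h2 : ∀ x : P, (Set.Iic x).Finite) {a b : P} (hab : a < b) :
    ∃ c, a ≤ c ∧ c ⋖ b := by
  have hS : {z : P | a ≤ z ∧ z < b}.Finite :=
    (h2 b).subset (fun z hz => le_of_lt hz.2)
  obtain ⟨c, hc, hmax⟩ := hS.exists_maximalFor id _ ⟨a, le_refl a, hab⟩
  refine ⟨c, hc.1, hc.2, fun z hcz hzb => ?_⟩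
  exact absurd (hmax (j := z) ⟨hc.1.trans hcz.le, hzb⟩ hcz.le) (not_le_of_gt hcz)

private lemma key_redundant {P : Type*} [Lattice P] [DecidableEq P] {n : ℕ} (hn : 0 < n)
    (h2 : ∀ x : P, (Set.Iic x).Finite)
    (h3 : ∀ x : P, {y : P | y ⋖ x}.ncard ≤ n)
    (X : Finset P) (hcard : n < X.card) (hX : X.Nonempty) :
    ∃ x ∈ X, ∀ h : (X.erase x).Nonempty,
      (X.erase x).sup' h id = X.sup' hX id := by
  have herase : ∀ x : P, (X.erase x).Nonempty := by
    intro x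
    rw [← Finset.card_pos]
    have := Finset.pred_card_le_card_erase (a := x) (s := X)
    omega
  set s := X.sup' hX id with hs
  by_contra hcon
  push_neg at hcon
  have hle : ∀ x : P, (X.erase x).sup' (herase x) id ≤ s := by
    intro x
    exact Finset.sup'_le _ _ fun b hb => Finset.le_sup' id (Finset.mem_of_mem_erase hb)
  have hlt : ∀ x ∈ X, (X.erase x).sup' (herase x) id < s := by
    intro x hx
    exact lt_of_le_of_ne (hle x) (hcon x hx).choose_spec
  have hcov : ∀ x ∈ X, ∃ c, (X.erase x).sup' (herase x) id ≤ c ∧ c ⋖ s :=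
    fun x hx => exists_le_covby h2 (hlt x hx)
  choose! c hc1 hc2 using hcov
  have hfin : {y : P | y ⋖ s}.Finite := (h2 s).subset fun y hy => hy.le
  have hTcard : hfin.toFinset.card ≤ n := by
    rw [← Set.ncard_eq_toFinset_card _ hfin]; exact h3 s
  obtain ⟨x, hx, y, hy, hxy, hcxy⟩ :=
    Finset.exists_ne_map_eq_of_card_lt_of_maps_to (lt_of_le_of_lt hTcard hcard)
      (fun x hx => hfin.mem_toFinset.mpr (hc2 x hx))
  have hsle : s ≤ c x := by
    refine Finset.sup'_le _ _ fun z hz => ?_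
    by_cases hzx : z = x
    · have hmem : z ∈ X.erase y := Finset.mem_erase.mpr ⟨hzx ▸ hxy, hz⟩
      calc z ≤ (X.erase y).sup' (herase y) id := Finset.le_sup' id hmem
        _ ≤ c y := hc1 y hy
        _ = c x := hcxy.symm
    · have hmem : z ∈ X.erase x := Finset.mem_erase.mpr ⟨hzx, hz⟩
      calc z ≤ (X.erase x).sup' (herase x) id := Finset.le_sup' id hmem
        _ ≤ c x := hc1 x hx
  exact absurd hsle (not_le_of_gt (hc2 x hx).lt)

private lemma main_aux {P : Type*} [Lattice P] [DecidableEq P] {n : ℕ} (hn : 0 < n)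
    (h2 : ∀ x : P, (Set.Iic x).Finite)
    (h3 : ∀ x : P, {y : P | y ⋖ x}.ncard ≤ n) (m : ℕ) :
    ∀ X : Finset P, X.card ≤ m → ∀ hX : X.Nonempty,
      ∃ (Y : Finset P) (hY : Y.Nonempty),
        Y ⊆ X ∧ Y.card ≤ n ∧ X.sup' hX id = Y.sup' hY id := by
  induction m with
  | zero =>
    intro X hle hX
    have := Finset.card_pos.mpr hX
    omega
  | succ m ih =>
    intro X hle hX
    by_cases hcn : X.card ≤ n
    · exact ⟨X, hX, subset_rfl, hcn, rfl⟩
    · push_neg at hcn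
      obtain ⟨x, hx, hsup⟩ := key_redundant hn h2 h3 X hcn hX
      have hne : (X.erase x).Nonempty := by
        rw [← Finset.card_pos]
        have := Finset.pred_card_le_card_erase (a := x) (s := X)
        omega
      have hcle : (X.erase x).card ≤ m := by
        rw [Finset.card_erase_of_mem hx]; omega
      obtain ⟨Y, hY, hsub, hYcard, heq⟩ := ih (X.erase x) hcle hne
      exact ⟨Y, hY, hsub.trans (Finset.erase_subset x X), hYcard,
        by rw [← hsup hne, heq]⟩

/-- Ditor: for every positive integer `n`, every `n`-ladder has
breadth at most `n`. -/
theorem ladder_breadth {P : Type*} [Lattice P] (n : ℕ) (hn : 0 < n)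
    (h : IsNLadder P n) : HasBreadthAtMost P n := by
  classical
  obtain ⟨-, h2, h3⟩ := h
  intro X hX
  exact main_aux hn h2 h3 X.card X le_rfl hX
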